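/- Let P be a finite poset such that antichain rowmotion Ψ: A(P) → A(P) is well-defined, and suppose π: P → ℝ satisfies Σ_{p∈A} π(p) = Σ_{p∈Ψ(A)} π(p) for every antichain A of P. Then π(p) = 0 for all p ∈ P. -/

import Mathlib

open scoped Classical
open Finset

variable {P : Type*} [Fintype P] [PartialOrder P]

/-- `I` is an order ideal (downward-closed subset) of the finite poset `P`. -/
def IsIdeal (I : Finset P) : Prop := ∀ ⦃x y : P⦄, x ≤ y → y ∈ I → x ∈ I

/-- `p` is a minimal element of the complement `P \ I`. -/
def CanTogIn (I : Finset P) (p : P) : Prop := p ∉ I ∧ ∀ q, q < p → q ∈ I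

/-- `p` is a maximal element of `I`. -/
def CanTogOut (I : Finset P) (p : P) : Prop := p ∈ I ∧ ∀ q, p < q → q ∉ I

/-- Rowmotion: the order ideal generated by the minimal elements of `P \ I`. -/
noncomputable def rowmotion (I : Finset P) : Finset P :=
  univ.filter fun x => ∃ y, CanTogIn I y ∧ x ≤ y

/-- Toggleability statistic `T⁺_p`. -/
noncomputable def Tin (p : P) (I : Finset P) : ℝ := if CanTogIn I p then 1 else 0

/-- Toggleability statistic `T⁻_p`. -/
noncomputable def Tout (p : P) (I : Finset P) : ℝ := if CanTogOut I p then 1 else 0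

/-- Signed toggleability statistic `T_p = T⁺_p - T⁻_p`. -/
noncomputable def Tsgn (p : P) (I : Finset P) : ℝ := Tin p I - Tout p I

/-- The order ideal generated by a subset `A`. -/
noncomputable def genIdeal (A : Finset P) : Finset P :=
  univ.filter fun x => ∃ y ∈ A, x ≤ y

/-- Antichain rowmotion: the minimal elements of the complement of the
order ideal generated by `A`. -/
noncomputable def antichainRowmotion (A : Finset P) : Finset P :=
  univ.filter fun p => CanTogIn (genIdeal A) p

/-- The set of maximal elements of `I`. -/
noncomputable def maxSet (I : Finset P) : Finset P :=
  I.filter fun p => ∀ q, p < q → q ∉ I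

lemma maxSet_antichain (I : Finset P) :
    IsAntichain (· ≤ ·) ((maxSet I : Finset P) : Set P) := by
  intro a ha b hb hne hab
  rw [Finset.mem_coe, maxSet, mem_filter] at ha hb
  exact ha.2 b (lt_of_le_of_ne hab hne) hb.1

lemma genIdeal_maxSet {I : Finset P} (hI : IsIdeal I) : genIdeal (maxSet I) = I := by
  ext x
  simp only [genIdeal, mem_filter, mem_univ, true_and]
  constructor
  · rintro ⟨y, hy, hxy⟩
    exact hI hxy (mem_filter.mp hy).1
  · intro hx
    obtain ⟨m, hm, hmax⟩ := (I.filter fun y => x ≤ y).exists_maximal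
      ⟨x, mem_filter.mpr ⟨hx, le_refl x⟩⟩
    rw [mem_filter] at hm
    refine ⟨m, mem_filter.mpr ⟨hm.1, fun q hq hqI => ?_⟩, hm.2⟩
    exact lt_irrefl m (hq.trans_le (hmax (mem_filter.mpr ⟨hqI, hm.2.trans hq.le⟩) hq.le))

lemma isIdeal_erase {I : Finset P} (hI : IsIdeal I) {p : P} (hp : ∀ q, p < q → q ∉ I) :
    IsIdeal (I.erase p) := by
  intro x y hxy hy
  rw [mem_erase] at hy ⊢
  refine ⟨?_, hI hxy hy.2⟩
  rintro rfl
  rcases hxy.lt_or_eq with h' | rfl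
  · exact hp y h' hy.2
  · exact hy.1 rfl

lemma isIdeal_insert {I : Finset P} (hI : IsIdeal I) {q : P} (hq : ∀ r, r < q → r ∈ I) :
    IsIdeal (insert q I) := by
  intro x y hxy hy
  rw [mem_insert] at hy ⊢
  rcases hy with rfl | hy
  · rcases hxy.lt_or_eq with h' | rfl
    · exact Or.inr (hq x h')
    · exact Or.inl rfl
  · exact Or.inr (hI hxy hy)

/-- Key descent lemma: a maximizer of `I ↦ ∑_{p ∈ I} π p` over ideals has value `≤ 0`. -/
lemma descend (π : P → ℝ)
    (h : ∀ A : Finset P, IsAntichain (· ≤ ·) (A : Set P) →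
      ∑ p ∈ A, π p = ∑ p ∈ antichainRowmotion A, π p) :
    ∀ n (I : Finset P), I.card = n → IsIdeal I →
      (∀ J : Finset P, IsIdeal J → ∑ p ∈ J, π p ≤ ∑ p ∈ I, π p) →
      ∑ p ∈ I, π p ≤ 0 := by
  intro n
  induction n using Nat.strong_induction_on with
  | _ n ih =>
    intro I hcard hI hmax
    rcases I.eq_empty_or_nonempty with rfl | hne
    · simp
    · obtain ⟨p, hpI, hpmax⟩ := I.exists_maximal hne
      have hpmem : p ∈ maxSet I := mem_filter.mpr ⟨hpI, fun q hq hqI => lt_irrefl p (hq.trans_le (hpmax hqI hq.le))⟩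
      have hsum : ∑ x ∈ maxSet I, π x = ∑ x ∈ univ.filter (fun q => CanTogIn I q), π x := by
        have := h (maxSet I) (maxSet_antichain I)
        rwa [antichainRowmotion, genIdeal_maxSet hI] at this
      have hrhs : ∑ x ∈ univ.filter (fun q => CanTogIn I q), π x ≤ 0 := by
        apply Finset.sum_nonpos
        intro q hq
        rw [mem_filter] at hq
        have hins : IsIdeal (insert q I) := isIdeal_insert hI hq.2.2
        have := hmax _ hins
        rwa [Finset.sum_insert hq.2.1, add_le_iff_nonpos_left] at this
      have hnn : ∀ x ∈ maxSet I, 0 ≤ π x := by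
        intro x hx
        rw [maxSet, mem_filter] at hx
        have her : IsIdeal (I.erase x) := isIdeal_erase hI hx.2
        have h1 := hmax _ her
        rw [Finset.sum_erase_eq_sub hx.1] at h1
        linarith
      have hzero : ∀ x ∈ maxSet I, π x = 0 := by
        rw [← Finset.sum_eq_zero_iff_of_nonneg hnn]
        exact le_antisymm (hsum ▸ hrhs) (Finset.sum_nonneg hnn)
      have hπp : π p = 0 := hzero p hpmem
      have herI : IsIdeal (I.erase p) := isIdeal_erase hI (fun q hq hqI => lt_irrefl p (hq.trans_le (hpmax hqI hq.le)))
      have heq : ∑ x ∈ I.erase p, π x = ∑ x ∈ I, π x := by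
        rw [Finset.sum_erase_eq_sub hpI, hπp, sub_zero]
      have hlt : (I.erase p).card < n := by
        rw [Finset.card_erase_of_mem hpI, ← hcard]
        exact Nat.sub_lt (card_pos.mpr hne) one_pos
      have := ih (I.erase p).card hlt (I.erase p) rfl herI
        (fun J hJ => (hmax J hJ).trans_eq heq.symm)
      rwa [heq] at this

lemma sum_ideal_nonpos (π : P → ℝ)
    (h : ∀ A : Finset P, IsAntichain (· ≤ ·) (A : Set P) →
      ∑ p ∈ A, π p = ∑ p ∈ antichainRowmotion A, π p) :
    ∀ I : Finset P, IsIdeal I → ∑ p ∈ I, π p ≤ 0 := by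
  intro I hI
  obtain ⟨I₀, hI₀mem, hI₀max⟩ := (univ.powerset.filter IsIdeal).exists_max_image
    (fun J => ∑ p ∈ J, π p) ⟨∅, by simp [IsIdeal]⟩
  rw [mem_filter] at hI₀mem
  have hmax : ∀ J : Finset P, IsIdeal J → ∑ p ∈ J, π p ≤ ∑ p ∈ I₀, π p := by
    intro J hJ
    exact hI₀max J (mem_filter.mpr ⟨mem_powerset.mpr (subset_univ J), hJ⟩)
  have h0 := descend π h I₀.card I₀ rfl hI₀mem.2 hmax
  exact (hmax I hI).trans h0

/-- If `π : P → ℝ` satisfies `∑_{p∈A} π(p) = ∑_{p∈Ψ(A)} π(p)` for every antichain `A`,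
then `π` is identically zero. -/
theorem eq_zero_of_antichainRowmotion_invariant (π : P → ℝ)
    (h : ∀ A : Finset P, IsAntichain (· ≤ ·) (A : Set P) →
      ∑ p ∈ A, π p = ∑ p ∈ antichainRowmotion A, π p) :
    ∀ p : P, π p = 0 := by
  have hneg : ∀ A : Finset P, IsAntichain (· ≤ ·) (A : Set P) →
      ∑ p ∈ A, (fun x => -π x) p = ∑ p ∈ antichainRowmotion A, (fun x => -π x) p := by
    intro A hA
    simp only
    rw [Finset.sum_neg_distrib, Finset.sum_neg_distrib, h A hA]
  have hzero : ∀ I : Finset P, IsIdeal I → ∑ p ∈ I, π p = 0 := by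
    intro I hI
    have h1 := sum_ideal_nonpos π h I hI
    have h2 := sum_ideal_nonpos (fun x => -π x) hneg I hI
    rw [Finset.sum_neg_distrib] at h2
    linarith
  intro p
  have hle : IsIdeal (univ.filter fun x => x ≤ p) := by
    intro x y hxy hy
    rw [mem_filter] at hy ⊢
    exact ⟨mem_univ x, hxy.trans hy.2⟩
  have hlt : IsIdeal (univ.filter fun x => x < p) := by
    intro x y hxy hy
    rw [mem_filter] at hy ⊢
    exact ⟨mem_univ x, lt_of_le_of_lt hxy hy.2⟩
  have hins : (univ.filter fun x => x ≤ p) = insert p (univ.filter fun x => x < p) := by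
    ext x
    simp only [mem_filter, mem_univ, true_and, mem_insert]
    rw [le_iff_lt_or_eq]
    tauto
  have h1 := hzero _ hle
  have h2 := hzero _ hlt
  rw [hins, Finset.sum_insert (by simp)] at h1
  linarith
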